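/- Let G be a finite group, x ∈ G, and π an automorphism of the directed reduced power graph →RP(G). If the ≃-class x̂ is of Type II, then the ≃-class of x^π is also of Type II and o(x^π) = o(x). -/

import Mathlib

open Subgroup Set

variable (G : Type*) [Group G]

/-- Arc of the directed reduced power graph `→RP(G)`: from `x` to `y` iff `⟨y⟩ ⊊ ⟨x⟩`. -/
def rpArc (x y : G) : Prop := zpowers y < zpowers x

/-- Adjacency in the undirected reduced power graph `RP(G)`:
`x` and `y` are adjacent iff `⟨x⟩ ⊊ ⟨y⟩` or `⟨y⟩ ⊊ ⟨x⟩`. -/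
def rpAdj (x y : G) : Prop := zpowers x < zpowers y ∨ zpowers y < zpowers x

/-- `x ≃ y` iff `x` and `y` have the same neighbourhood in `RP(G)`. -/
def simEq (x y : G) : Prop := ∀ z : G, rpAdj G x z ↔ rpAdj G y z

/-- The `≃`-class `x̂` of `x`. -/
def hatCls (x : G) : Set G := {y | simEq G y x}

/-- The `∼`-class `[x]` of `x`: the set of generators of `⟨x⟩`. -/
def genCls (x : G) : Set G := {y | zpowers y = zpowers x}

/-- The automorphism group of the directed reduced power graph `→RP(G)`,
as a subgroup of the permutations of `G`. -/
def DRPAut : Subgroup (Equiv.Perm G) where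
  carrier := {π | ∀ x y : G, rpArc G (π x) (π y) ↔ rpArc G x y}
  one_mem' := fun _ _ => Iff.rfl
  mul_mem' := by
    intro a b ha hb x y
    simp only [Equiv.Perm.mul_apply]
    exact (ha (b x) (b y)).trans (hb x y)
  inv_mem' := by
    intro a ha x y
    have h := ha (a⁻¹ x) (a⁻¹ y)
    simp only [← Equiv.Perm.mul_apply, mul_inv_cancel, Equiv.Perm.one_apply] at h
    exact h.symm

/-- The automorphism group of the undirected reduced power graph `RP(G)`,
as a subgroup of the permutations of `G`. -/
def RPAut : Subgroup (Equiv.Perm G) where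
  carrier := {π | ∀ x y : G, rpAdj G (π x) (π y) ↔ rpAdj G x y}
  one_mem' := fun _ _ => Iff.rfl
  mul_mem' := by
    intro a b ha hb x y
    simp only [Equiv.Perm.mul_apply]
    exact (ha (b x) (b y)).trans (hb x y)
  inv_mem' := by
    intro a ha x y
    have h := ha (a⁻¹ x) (a⁻¹ y)
    simp only [← Equiv.Perm.mul_apply, mul_inv_cancel, Equiv.Perm.one_apply] at h
    exact h.symm

/-- `⟨x⟩` is a maximal cyclic subgroup of `G`. -/
def IsMaxCyc (x : G) : Prop := ∀ y : G, zpowers x ≤ zpowers y → zpowers x = zpowers y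

/-- The `≃`-class of `x` is of Type I: it is a single `∼`-class, `x̂ = [x]`. -/
def TypeI (x : G) : Prop := hatCls G x = genCls G x

/-- The `≃`-class of `x` is of Type II: it is a union of `r ≥ 2` `∼`-classes whose
cyclic subgroups are distinct maximal cyclic subgroups of `G`, all of the same order. -/
def TypeII (x : G) : Prop :=
  (∃ y z : G, simEq G y x ∧ simEq G z x ∧ zpowers y ≠ zpowers z) ∧
  ∀ y : G, simEq G y x → IsMaxCyc G y ∧ orderOf y = orderOf x

/-- The `≃`-class of `x` is of Type III: `G` is non-cyclic, the class is a union of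
`r ≥ 2` `∼`-classes whose cyclic subgroups are maximal cyclic subgroups of prime order,
and at least two distinct orders occur. -/
def TypeIII (x : G) : Prop :=
  ¬ IsCyclic G ∧
  (∃ y z : G, simEq G y x ∧ simEq G z x ∧ orderOf y ≠ orderOf z) ∧
  ∀ y : G, simEq G y x → IsMaxCyc G y ∧ (orderOf y).Prime

/-- The `≃`-class of `x` is of Type IV with parameter `(p, q)`: it is a union of exactly
two `∼`-classes of elements of distinct prime orders `p` and `q`, the corresponding cyclic
subgroups being non-maximal when `G` is non-cyclic, and maximal when `G` is cyclic. -/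
def TypeIV (x : G) (p q : ℕ) : Prop :=
  p.Prime ∧ q.Prime ∧ p ≠ q ∧
  (∃ x₁ x₂ : G, simEq G x₁ x ∧ simEq G x₂ x ∧ orderOf x₁ = p ∧ orderOf x₂ = q ∧
     ∀ y : G, simEq G y x → zpowers y = zpowers x₁ ∨ zpowers y = zpowers x₂) ∧
  ((¬ IsCyclic G ∧ ∀ y : G, simEq G y x → ¬ IsMaxCyc G y) ∨
   (IsCyclic G ∧ ∀ y : G, simEq G y x → IsMaxCyc G y))

/-- A `P(G)`-permutation: a permutation `σ` of `G` preserving element orders, mapping each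
`∼`-class `[x]` onto `[x^σ]`, and preserving inclusion and non-inclusion of cyclic subgroups. -/
def IsPPerm (σ : Equiv.Perm G) : Prop :=
  (∀ x : G, orderOf (σ x) = orderOf x) ∧
  (∀ x : G, σ '' genCls G x = genCls G (σ x)) ∧
  (∀ x y : G, zpowers y ≤ zpowers x ↔ zpowers (σ y) ≤ zpowers (σ x))

/-- A permutation of `G` fixing every `≃`-class setwise. -/
def FixesClasses (τ : Equiv.Perm G) : Prop := ∀ x : G, simEq G (τ x) x

section AuxRP

variable {G : Type*} [Group G]

/-- The strict "down set" of `a`: elements generating strictly smaller cyclic subgroups. -/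
def dSet (a : G) : Set G := {c | zpowers c < zpowers a}

/-- The strict "up set" of `a`. -/
def uSet (a : G) : Set G := {c | zpowers a < zpowers c}

lemma mem_dSet {a c : G} : c ∈ dSet a ↔ zpowers c < zpowers a := Iff.rfl

lemma mem_uSet {a c : G} : c ∈ uSet a ↔ zpowers a < zpowers c := Iff.rfl

lemma simEq_refl' (a : G) : simEq G a a := fun _ => Iff.rfl

lemma simEq_symm' {a b : G} (h : simEq G a b) : simEq G b a := fun c => (h c).symm

lemma simEq_trans' {a b c : G} (h1 : simEq G a b) (h2 : simEq G b c) : simEq G a c :=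
  fun d => (h1 d).trans (h2 d)

lemma simEq_of_zpowers_eq {a b : G} (h : zpowers a = zpowers b) : simEq G a b := by
  intro c; unfold rpAdj; rw [h]

lemma mem_DRPAut {π : Equiv.Perm G} :
    π ∈ DRPAut G ↔ ∀ x y : G, rpArc G (π x) (π y) ↔ rpArc G x y := Iff.rfl

lemma isMaxCyc_iff_uSet_empty {a : G} : IsMaxCyc G a ↔ uSet a = (∅ : Set G) := by
  constructor
  · intro h
    ext c
    simp only [Set.mem_empty_iff_false, iff_false, mem_uSet]
    intro hc
    exact hc.ne (h c hc.le)
  · intro h c hle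
    rcases eq_or_lt_of_le hle with he | hlt
    · exact he
    · exact absurd (mem_uSet.mpr hlt) (by simp [h])

lemma dSet_one : dSet (1 : G) = (∅ : Set G) := by
  ext c
  simp only [Set.mem_empty_iff_false, iff_false, mem_dSet, zpowers_one_eq_bot]
  exact fun hc => (not_lt_bot hc)

lemma one_mem_dSet {a : G} (ha : a ≠ 1) : (1 : G) ∈ dSet a := by
  rw [mem_dSet, zpowers_one_eq_bot, bot_lt_iff_ne_bot]
  simpa [zpowers_eq_bot] using ha

lemma dSet_subset_zpowers {a : G} : dSet a ⊆ (zpowers a : Set G) :=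
  fun c hc => zpowers_le.mp (mem_dSet.mp hc).le

lemma zpowers_set_eq_dSet_union_genCls (a : G) :
    (zpowers a : Set G) = dSet a ∪ genCls G a := by
  ext c
  simp only [Set.mem_union, mem_dSet, genCls, Set.mem_setOf_eq, SetLike.mem_coe]
  rw [← zpowers_le]
  exact le_iff_lt_or_eq

lemma disjoint_dSet_genCls (a : G) : Disjoint (dSet a) (genCls G a) := by
  rw [Set.disjoint_left]
  intro c hc hc'
  exact (mem_dSet.mp hc).ne hc'

lemma simEq_iff_dSet_eq {a b : G} (ha : IsMaxCyc G a) (hb : IsMaxCyc G b) :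
    simEq G a b ↔ dSet a = dSet b := by
  have key : ∀ (w : G), IsMaxCyc G w → ∀ c, rpAdj G w c ↔ c ∈ dSet w := by
    intro w hw c
    constructor
    · rintro (h | h)
      · exact absurd h.ne (not_not.mpr (hw c h.le))
      · exact mem_dSet.mpr h
    · intro h
      exact Or.inr (mem_dSet.mp h)
  constructor
  · intro h
    ext c
    rw [← key a ha c, ← key b hb c]
    exact h c
  · intro h c
    rw [key a ha c, key b hb c, h]

end AuxRP
section AuxPerm

variable {G : Type*} [Group G] {π : Equiv.Perm G}

lemma zp_lt_iff (hπ : π ∈ DRPAut G) (a b : G) :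
    zpowers (π a) < zpowers (π b) ↔ zpowers a < zpowers b :=
  mem_DRPAut.mp hπ b a

lemma rpAdj_image_iff (hπ : π ∈ DRPAut G) (a b : G) :
    rpAdj G (π a) (π b) ↔ rpAdj G a b :=
  or_congr (mem_DRPAut.mp hπ b a) (mem_DRPAut.mp hπ a b)

lemma dSet_image (hπ : π ∈ DRPAut G) (a : G) : dSet (π a) = π '' dSet a := by
  ext c
  constructor
  · intro hc
    refine ⟨π.symm c, ?_, π.apply_symm_apply c⟩
    rw [mem_dSet, ← zp_lt_iff hπ, π.apply_symm_apply]
    exact hc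
  · rintro ⟨s, hs, rfl⟩
    exact mem_dSet.mpr ((zp_lt_iff hπ s a).mpr hs)

lemma uSet_image (hπ : π ∈ DRPAut G) (a : G) : uSet (π a) = π '' uSet a := by
  ext c
  constructor
  · intro hc
    refine ⟨π.symm c, ?_, π.apply_symm_apply c⟩
    rw [mem_uSet, ← zp_lt_iff hπ, π.apply_symm_apply]
    exact hc
  · rintro ⟨s, hs, rfl⟩
    exact mem_uSet.mpr ((zp_lt_iff hπ a s).mpr hs)

lemma perm_one_eq (hπ : π ∈ DRPAut G) : π 1 = 1 := by
  by_contra h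
  have h1 : (1 : G) ∈ dSet (π 1) := one_mem_dSet h
  rw [dSet_image hπ, dSet_one, Set.image_empty] at h1
  exact h1

lemma isMaxCyc_image_iff (hπ : π ∈ DRPAut G) (a : G) :
    IsMaxCyc G (π a) ↔ IsMaxCyc G a := by
  rw [isMaxCyc_iff_uSet_empty, isMaxCyc_iff_uSet_empty, uSet_image hπ, Set.image_eq_empty]

lemma simEq_image_iff (hπ : π ∈ DRPAut G) (a b : G) :
    simEq G (π a) (π b) ↔ simEq G a b := by
  constructor
  · intro h c
    rw [← rpAdj_image_iff hπ a c, ← rpAdj_image_iff hπ b c]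
    exact h (π c)
  · intro h c
    rw [show c = π (π.symm c) from (π.apply_symm_apply c).symm,
      rpAdj_image_iff hπ, rpAdj_image_iff hπ]
    exact h (π.symm c)

end AuxPerm

section AuxOrder

variable {G : Type*} [Group G] [Fintype G]

lemma orderOf_eq_of_zpowers_eq {c w : G} (h : zpowers c = zpowers w) :
    orderOf c = orderOf w := by
  rw [← Nat.card_zpowers, ← Nat.card_zpowers, h]

lemma zpowers_lt_of_mem_of_ne {c w : G} (hm : c ∈ zpowers w)
    (hne : orderOf c ≠ orderOf w) : zpowers c < zpowers w :=
  lt_of_le_of_ne (zpowers_le.mpr hm) (fun h => hne (orderOf_eq_of_zpowers_eq h))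

lemma orderOf_ne_of_zpowers_lt {c w : G} (h : zpowers c < zpowers w) :
    orderOf c ≠ orderOf w := by
  intro he
  have h1 : c ∈ zpowers w := zpowers_le.mp h.le
  have h2 : zpowers c = zpowers w := by
    apply Subgroup.eq_of_le_of_card_ge h.le
    rw [Nat.card_zpowers, Nat.card_zpowers, he]
  exact h.ne h2

lemma orderOf_dvd_of_zpowers_lt {c w : G} (h : zpowers c < zpowers w) :
    orderOf c ∣ orderOf w :=
  orderOf_dvd_of_mem_zpowers (zpowers_le.mp h.le)

lemma mem_zpowers_pow_of_orderOf_dvd {a w : G} (ha : a ∈ zpowers w) {e : ℕ}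
    (he : e ∣ orderOf w) (hae : orderOf a ∣ e) : a ∈ zpowers (w ^ (orderOf w / e)) := by
  obtain ⟨i, rfl⟩ := mem_zpowers_iff.mp ha
  obtain ⟨f, hf⟩ := he
  have he0 : e ≠ 0 := by
    rintro rfl
    exact (orderOf_pos w).ne' (by simpa using hf)
  have hpow : (w ^ i) ^ (e : ℤ) = 1 := by
    rw [zpow_natCast]
    exact orderOf_dvd_iff_pow_eq_one.mp hae
  rw [← zpow_mul] at hpow
  have hdvd : ((orderOf w : ℤ)) ∣ i * e := orderOf_dvd_iff_zpow_eq_one.mpr hpow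
  rw [hf] at hdvd
  push_cast at hdvd
  obtain ⟨t, ht⟩ := hdvd
  have hif : i = f * t := by
    have he0' : (e : ℤ) ≠ 0 := by exact_mod_cast he0
    have : i * e = (f * t) * e := by linarith [ht]
    exact mul_right_cancel₀ he0' this
  have hNe : orderOf w / e = f := by
    rw [hf, Nat.mul_div_cancel_left f (Nat.pos_of_ne_zero he0)]
  rw [hNe, mem_zpowers_iff]
  refine ⟨t, ?_⟩
  rw [← zpow_natCast w f, ← zpow_mul, ← hif]

lemma orderOf_pow_div {w : G} {e : ℕ} (he : e ∣ orderOf w) (he0 : e ≠ 0) :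
    orderOf (w ^ (orderOf w / e)) = e := by
  have hN : orderOf w ≠ 0 := (orderOf_pos w).ne'
  have hne0 : orderOf w / e ≠ 0 := by
    have := Nat.div_pos (Nat.le_of_dvd (Nat.pos_of_ne_zero hN) he) (Nat.pos_of_ne_zero he0)
    omega
  rw [orderOf_pow' w hne0, Nat.gcd_eq_right (Nat.div_dvd_of_dvd he), Nat.div_div_self he hN]

lemma mem_zpowers_of_orderOf_dvd {a b w : G} (ha : a ∈ zpowers w) (hb : b ∈ zpowers w)
    (h : orderOf a ∣ orderOf b) : a ∈ zpowers b := by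
  have heN : orderOf b ∣ orderOf w := orderOf_dvd_of_mem_zpowers hb
  have he0 : orderOf b ≠ 0 := (orderOf_pos b).ne'
  have h1 : a ∈ zpowers (w ^ (orderOf w / orderOf b)) :=
    mem_zpowers_pow_of_orderOf_dvd ha heN h
  have h2 : b ∈ zpowers (w ^ (orderOf w / orderOf b)) :=
    mem_zpowers_pow_of_orderOf_dvd hb heN dvd_rfl
  have h3 : zpowers b = zpowers (w ^ (orderOf w / orderOf b)) := by
    apply Subgroup.eq_of_le_of_card_ge (zpowers_le.mpr h2)
    rw [Nat.card_zpowers, Nat.card_zpowers, orderOf_pow_div heN he0]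
  rw [h3]
  exact h1

lemma zpowers_le_of_orderOf_dvd {a b w : G} (ha : a ∈ zpowers w) (hb : b ∈ zpowers w)
    (h : orderOf a ∣ orderOf b) : zpowers a ≤ zpowers b :=
  zpowers_le.mpr (mem_zpowers_of_orderOf_dvd ha hb h)

end AuxOrder
section AuxCard

variable {G : Type*} [Group G] [Fintype G]

lemma ncard_coe_zpowers (a : G) : (zpowers a : Set G).ncard = orderOf a := by
  rw [← Nat.card_coe_set_eq, SetLike.coe_sort_coe, Nat.card_zpowers]

lemma orderOf_eq_dSet_add_genCls (a : G) :
    orderOf a = (dSet a).ncard + (genCls G a).ncard := by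
  rw [← ncard_coe_zpowers a, zpowers_set_eq_dSet_union_genCls a,
    Set.ncard_union_eq (disjoint_dSet_genCls a)]

lemma inter_coe_eq_dSet {y z : G} (hy : IsMaxCyc G y) (hne : zpowers y ≠ zpowers z)
    (hdz : dSet y = dSet z) :
    ((zpowers y ⊓ zpowers z : Subgroup G) : Set G) = dSet y := by
  ext c
  rw [Subgroup.coe_inf, Set.mem_inter_iff]
  constructor
  · rintro ⟨hcy, hcz⟩
    have h1 : zpowers c ≤ zpowers y := zpowers_le.mpr hcy
    rcases eq_or_lt_of_le h1 with he | hlt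
    · exact absurd (hy z (he ▸ zpowers_le.mpr hcz)) hne
    · exact mem_dSet.mpr hlt
  · intro hc
    refine ⟨zpowers_le.mp (mem_dSet.mp hc).le, ?_⟩
    have : c ∈ dSet z := hdz ▸ hc
    exact zpowers_le.mp (mem_dSet.mp this).le

lemma dvd_div_prime_of_proper {a m : ℕ} (hm : m ≠ 0) (ha : a ∣ m) (hne : a ≠ m) :
    ∃ ρ, ρ.Prime ∧ ρ ∣ m ∧ a ∣ m / ρ := by
  obtain ⟨b, rfl⟩ := ha
  have hb1 : b ≠ 1 := by rintro rfl; simp at hne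
  have hρ : b.minFac.Prime := Nat.minFac_prime hb1
  refine ⟨b.minFac, hρ, (b.minFac_dvd).mul_left a, ?_⟩
  rw [Nat.mul_div_assoc a b.minFac_dvd]
  exact Dvd.intro _ rfl

/-- The key arithmetic lemma: if the set of elements strictly below `w` is (the carrier of)
a subgroup `D` of more than one element, then `orderOf w = p ^ (j+1)` and `|D| = p ^ j`. -/
lemma key_card (w : G) (D : Subgroup G) (hD : (D : Set G) = dSet w)
    (hd : 1 < Nat.card D) :
    ∃ p j, p.Prime ∧ 1 ≤ j ∧ Nat.card D = p ^ j ∧ orderOf w = p ^ (j + 1) := by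
  set d := Nat.card D with hd_def
  set m := orderOf w with hm_def
  have hDle : D ≤ zpowers w := by
    intro c hc
    have : c ∈ dSet w := hD ▸ hc
    exact zpowers_le.mp (mem_dSet.mp this).le
  have hdm : d ∣ m := by
    have := Subgroup.card_dvd_of_le hDle
    rwa [Nat.card_zpowers] at this
  have hm0 : 0 < m := orderOf_pos w
  have hDne : D ≠ zpowers w := by
    intro h
    have : w ∈ (D : Set G) := by rw [h]; exact mem_zpowers w
    rw [hD] at this
    exact lt_irrefl _ (mem_dSet.mp this)
  have hdltm : d < m := by
    refine lt_of_le_of_ne (Nat.le_of_dvd hm0 hdm) (fun h => hDne ?_)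
    refine Subgroup.eq_of_le_of_card_ge hDle ?_
    rw [Nat.card_zpowers, ← hm_def, ← h]
  have hm1 : 1 < m := lt_trans hd hdltm
  have step : ∀ q : ℕ, q.Prime → q ∣ m → m / q ∣ d := by
    intro q hq hqm
    have hqmem : w ^ q ∈ zpowers w := npow_mem_zpowers w q
    have ht : orderOf (w ^ q) = m / q := by
      rw [orderOf_pow' w hq.ne_zero, Nat.gcd_eq_right hqm]
    have hlt : zpowers (w ^ q) < zpowers w := by
      apply zpowers_lt_of_mem_of_ne hqmem
      rw [ht]
      exact (Nat.div_lt_self hm0 hq.one_lt).ne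
    have hmemD : w ^ q ∈ (D : Set G) := by rw [hD]; exact mem_dSet.mpr hlt
    have := Subgroup.card_dvd_of_le (zpowers_le.mpr hmemD)
    rwa [Nat.card_zpowers, ht] at this
  have huniq : ∀ ρ : ℕ, ρ.Prime → ρ ∣ m → ρ = m.minFac := by
    by_contra hcon
    push_neg at hcon
    obtain ⟨q1, hq1, hq1m, hq1ne⟩ := hcon
    have hq2 : (m.minFac).Prime := Nat.minFac_prime hm1.ne'
    have hq2m : m.minFac ∣ m := m.minFac_dvd
    set q2 := m.minFac
    -- show m ∣ d, contradiction
    have hcop : Nat.Coprime q1 q2 := (Nat.coprime_primes hq1 hq2).mpr hq1ne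
    have hq12 : q1 * q2 ∣ m := hcop.mul_dvd_of_dvd_of_dvd hq1m hq2m
    obtain ⟨s, hs⟩ := hq12
    have hs0 : s ≠ 0 := by rintro rfl; simp at hs; omega
    have hmq1 : m / q1 = q2 * s := by
      rw [hs, mul_assoc, Nat.mul_div_cancel_left _ hq1.pos]
    have hmq2 : m / q2 = q1 * s := by
      rw [hs, show q1 * q2 * s = q2 * (q1 * s) by ring,
        Nat.mul_div_cancel_left _ hq2.pos]
    have h1 : q2 * s ∣ d := hmq1 ▸ step q1 hq1 hq1m
    have h2 : q1 * s ∣ d := hmq2 ▸ step q2 hq2 hq2m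
    obtain ⟨t, ht⟩ := h1
    have h3 : q1 ∣ q2 * t := by
      have : s * q1 ∣ s * (q2 * t) := by
        rw [show s * (q2 * t) = q2 * s * t by ring, ← ht]
        rw [mul_comm s q1]
        exact h2
      exact (Nat.mul_dvd_mul_iff_left (Nat.pos_of_ne_zero hs0)).mp this
    have h4 : q1 ∣ t := hcop.dvd_of_dvd_mul_left h3
    obtain ⟨u, hu⟩ := h4
    have hmd : m ∣ d := by
      rw [ht, hu, hs]
      exact ⟨u, by ring⟩
    exact absurd (Nat.le_of_dvd (by omega) hmd) (by omega)
  set q := m.minFac with hq_def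
  have hq : q.Prime := Nat.minFac_prime hm1.ne'
  have hmpow : m = q ^ m.primeFactorsList.length :=
    Nat.eq_prime_pow_of_unique_prime_dvd hm0.ne' (fun hd hdm => huniq _ hd hdm)
  set e := m.primeFactorsList.length
  have he1 : 1 ≤ e := by
    by_contra h
    push_neg at h
    interval_cases e
    simp at hmpow
    omega
  obtain ⟨j, hje, hdj⟩ := (Nat.dvd_prime_pow hq).mp (hmpow ▸ hdm)
  have hj1 : 1 ≤ j := by
    rcases Nat.eq_zero_or_pos j with h | h
    · subst h; simp at hdj; omega
    · exact h
  have hjne : j ≠ e := by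
    intro h
    rw [h, ← hmpow] at hdj
    omega
  have hmq : m / q ∣ d := step q hq m.minFac_dvd
  have hmqe : m / q = q ^ (e - 1) := by
    rw [hmpow, ← Nat.pow_div he1 hq.pos, pow_one]
  have hle : e - 1 ≤ j := by
    rw [hmqe, hdj] at hmq
    exact (Nat.pow_dvd_pow_iff_le_right hq.one_lt).mp hmq
  have hej : e = j + 1 := by omega
  exact ⟨q, j, hq, hj1, hdj, by rw [hmpow, hej]⟩

lemma eq_prime_of_dvd_mul_primes {o q1 q2 : ℕ} (hq1 : q1.Prime) (hq2 : q2.Prime)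
    (ho : o ∣ q1 * q2) (h1 : o ≠ 1) (h2 : o ≠ q1 * q2) : o = q1 ∨ o = q2 := by
  by_cases hq1o : q1 ∣ o
  · obtain ⟨o', rfl⟩ := hq1o
    have ho' : o' ∣ q2 := (Nat.mul_dvd_mul_iff_left hq1.pos).mp ho
    rcases (Nat.Prime.eq_one_or_self_of_dvd hq2 o' ho') with h | h
    · left; rw [h, mul_one]
    · exact absurd (by rw [h]) h2
  · have hcop : Nat.Coprime o q1 := Nat.Coprime.symm ((Nat.Prime.coprime_iff_not_dvd hq1).mpr hq1o)
    have : o ∣ q2 := by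
      rw [mul_comm] at ho
      exact hcop.dvd_of_dvd_mul_right ho
    rcases (Nat.Prime.eq_one_or_self_of_dvd hq2 o this) with h | h
    · exact absurd h h1
    · right; exact h

lemma dSet_eq_singleton_of_prime {u : G} (hu : (orderOf u).Prime) :
    dSet u = {(1 : G)} := by
  ext c
  simp only [Set.mem_singleton_iff]
  constructor
  · intro hc
    have h1 : orderOf c ∣ orderOf u := orderOf_dvd_of_zpowers_lt (mem_dSet.mp hc)
    have h2 : orderOf c ≠ orderOf u := orderOf_ne_of_zpowers_lt (mem_dSet.mp hc)
    rcases (Nat.Prime.eq_one_or_self_of_dvd hu _ h1) with h | h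
    · exact orderOf_eq_one_iff.mp h
    · exact absurd h h2
  · rintro rfl
    apply one_mem_dSet
    intro h
    rw [h, orderOf_one] at hu
    exact hu.one_lt.ne' rfl

lemma orderOf_prime_of_dSet_singleton {c : G} (hc : c ≠ 1) (h : dSet c = {(1 : G)}) :
    (orderOf c).Prime := by
  have ho1 : orderOf c ≠ 1 := fun he => hc (orderOf_eq_one_iff.mp he)
  have hρ : (orderOf c).minFac.Prime := Nat.minFac_prime ho1
  have hρdvd : (orderOf c).minFac ∣ orderOf c := Nat.minFac_dvd _
  have hc2 : orderOf (c ^ (orderOf c / (orderOf c).minFac)) = (orderOf c).minFac :=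
    orderOf_pow_div hρdvd hρ.ne_zero
  by_cases he : orderOf (c ^ (orderOf c / (orderOf c).minFac)) = orderOf c
  · rw [hc2] at he
    rw [← he]
    exact hρ
  · have hmem : c ^ (orderOf c / (orderOf c).minFac) ∈ zpowers c :=
      npow_mem_zpowers c _
    have hlt : zpowers (c ^ (orderOf c / (orderOf c).minFac)) < zpowers c :=
      zpowers_lt_of_mem_of_ne hmem he
    have : c ^ (orderOf c / (orderOf c).minFac) ∈ dSet c := mem_dSet.mpr hlt
    rw [h, Set.mem_singleton_iff] at this
    rw [this, orderOf_one] at hc2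
    exact absurd hc2.symm hρ.one_lt.ne'

lemma am_gm_nat (a b : ℕ) : 4 * (a * b) ≤ (a + b) ^ 2 := by
  have h : (4 * (a * b) : ℤ) ≤ ((a + b) ^ 2 : ℤ) := by nlinarith [sq_nonneg ((a : ℤ) - b)]
  exact_mod_cast h

lemma final_arith {p m q q2 : ℕ} (hp : 2 ≤ p) (h1 : 2 * p ^ 2 ≤ m + p)
    (h2 : 4 * m ≤ (q + q2) ^ 2) (h3 : (q + q2) ^ 2 ≤ (p + 1) ^ 2) : False := by
  nlinarith

end AuxCard
/-- if `x̂` is of Type II and `π` is an automorphism of `→RP(G)`, then the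
`≃`-class of `x^π` is also of Type II and `o(x^π) = o(x)`. -/
theorem aut_DRP_typeII {G : Type*} [Group G] [Fintype G]
    (π : Equiv.Perm G) (hπ : π ∈ DRPAut G) (x : G) (hT : TypeII G x) :
    TypeII G (π x) ∧ orderOf (π x) = orderOf x := by
  obtain ⟨⟨y, z, hy, hz, hyz⟩, hAll⟩ := hT
  have hxmax : IsMaxCyc G x := (hAll x (simEq_refl' x)).1
  have hymax : IsMaxCyc G y := (hAll y hy).1
  have hzmax : IsMaxCyc G z := (hAll z hz).1
  have hyo : orderOf y = orderOf x := (hAll y hy).2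
  have hzo : orderOf z = orderOf x := (hAll z hz).2
  set x' := π x with hx'_def
  have hSx' : dSet x' = π '' dSet x := dSet_image hπ x
  have hx'max : IsMaxCyc G x' := (isMaxCyc_image_iff hπ x).mpr hxmax
  have hSy : dSet y = dSet x := (simEq_iff_dSet_eq hymax hxmax).mp hy
  have hSz : dSet z = dSet x := (simEq_iff_dSet_eq hzmax hxmax).mp hz
  set n := orderOf x with hn_def
  set d := (dSet x).ncard with hd_def
  have hatmem : ∀ v : G, simEq G v x' ↔ simEq G (π.symm v) x := by
    intro v
    have h := simEq_image_iff hπ (π.symm v) x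
    rwa [π.apply_symm_apply] at h
  have hmaxAll : ∀ v : G, simEq G v x' → IsMaxCyc G v := by
    intro v hv
    have h1 := (hatmem v).mp hv
    have h2 := (hAll _ h1).1
    have h3 := (isMaxCyc_image_iff hπ (π.symm v)).mpr h2
    rwa [π.apply_symm_apply] at h3
  have hx1 : x ≠ 1 := by
    rintro rfl
    have h1 : zpowers (1 : G) = zpowers y :=
      hxmax y (by rw [zpowers_one_eq_bot]; exact bot_le)
    have h2 : zpowers (1 : G) = zpowers z :=
      hxmax z (by rw [zpowers_one_eq_bot]; exact bot_le)
    exact hyz (h1.symm.trans h2)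
  have h1d : (1 : G) ∈ dSet x := one_mem_dSet hx1
  have hdpos : 1 ≤ d := (Set.ncard_pos (Set.toFinite _)).mpr ⟨1, h1d⟩
  have hdx' : (dSet x').ncard = d := by
    rw [hSx', Set.ncard_image_of_injective _ π.injective]
  by_cases hd1 : d = 1
  · -- degenerate branch : dSet x = {1}
    have hSxs : dSet x = {1} := by
      obtain ⟨a, ha⟩ := Set.ncard_eq_one.mp (hd_def ▸ hd1 : (dSet x).ncard = 1)
      rw [ha] at h1d ⊢
      rw [Set.mem_singleton_iff] at h1d
      rw [h1d]
    have hSx's : dSet x' = {1} := by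
      rw [hSx', hSxs, Set.image_singleton, perm_one_eq hπ]
    have hsim : simEq G x' x :=
      (simEq_iff_dSet_eq hx'max hxmax).mpr (by rw [hSx's, hSxs])
    have ho : orderOf x' = orderOf x := (hAll x' hsim).2
    refine ⟨⟨⟨y, z, simEq_trans' hy (simEq_symm' hsim),
      simEq_trans' hz (simEq_symm' hsim), hyz⟩, ?_⟩, ho⟩
    intro v hv
    have hvx : simEq G v x := simEq_trans' hv hsim
    exact ⟨(hAll v hvx).1, by rw [ho]; exact (hAll v hvx).2⟩
  · have hd : 1 < d := by omega
    set D := zpowers y ⊓ zpowers z with hD_def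
    have hDcoe : (D : Set G) = dSet x := by
      rw [hD_def, inter_coe_eq_dSet hymax hyz (hSy.trans hSz.symm), hSy]
    have hDcard : Nat.card D = d := by
      have h := Nat.card_coe_set_eq (D : Set G)
      rw [SetLike.coe_sort_coe] at h
      rw [h, hDcoe]
    obtain ⟨p, j, hp, hj1, hdpj, hnpj⟩ := key_card x D hDcoe (by rw [hDcard]; exact hd)
    rw [hDcard] at hdpj
    have hnpj' : n = p ^ (j + 1) := hnpj
    by_cases hsplit : ∃ w₁ w₂ : G, simEq G w₁ x' ∧ simEq G w₂ x' ∧ zpowers w₁ ≠ zpowers w₂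
    · -- Case 1 : two distinct ∼-classes in the hat class of x'
      obtain ⟨w₁, w₂, hw1, hw2, hwne⟩ := hsplit
      have hw1max := hmaxAll w₁ hw1
      have hw2max := hmaxAll w₂ hw2
      have hS1 : dSet w₁ = dSet x' := (simEq_iff_dSet_eq hw1max hx'max).mp hw1
      have hS2 : dSet w₂ = dSet x' := (simEq_iff_dSet_eq hw2max hx'max).mp hw2
      set D' := zpowers w₁ ⊓ zpowers w₂ with hD'_def
      have hD'coe : (D' : Set G) = dSet x' := by
        rw [hD'_def, inter_coe_eq_dSet hw1max hwne (hS1.trans hS2.symm), hS1]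
      have hD'card : Nat.card D' = d := by
        have h := Nat.card_coe_set_eq (D' : Set G)
        rw [SetLike.coe_sort_coe] at h
        rw [h, hD'coe, hdx']
      have hkey : ∀ v : G, dSet v = dSet x' → orderOf v = p ^ (j + 1) := by
        intro v hv
        obtain ⟨p2, j2, hp2, hj2, hd2, ho2⟩ :=
          key_card v D' (hD'coe.trans hv.symm) (by rw [hD'card]; exact hd)
        rw [hD'card] at hd2
        have hpow : p2 ^ j2 = p ^ j := hd2.symm.trans hdpj
        have hpp : p2 = p := by
          have e1 : (p2 ^ j2).minFac = p2 := by
            rw [Nat.pow_minFac (by omega : j2 ≠ 0), Nat.Prime.minFac_eq hp2]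
          have e2 : (p ^ j).minFac = p := by
            rw [Nat.pow_minFac (by omega : j ≠ 0), Nat.Prime.minFac_eq hp]
          rw [← e1, ← e2, hpow]
        have hjj : j2 = j := by
          rw [hpp] at hpow
          exact Nat.pow_right_injective hp.two_le hpow
        rw [ho2, hpp, hjj]
      have hordx' : orderOf x' = orderOf x := by
        rw [hkey x' rfl, hnpj]
      refine ⟨⟨⟨w₁, w₂, hw1, hw2, hwne⟩, ?_⟩, hordx'⟩
      intro v hv
      refine ⟨hmaxAll v hv, ?_⟩
      rw [hkey v ((simEq_iff_dSet_eq (hmaxAll v hv) hx'max).mp hv), hkey x' rfl]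
    · -- Case 2 : derive a contradiction
      exfalso
      push_neg at hsplit
      set m := orderOf x' with hm_def
      have hhat_img : π '' hatCls G x = hatCls G x' := by
        ext c
        constructor
        · rintro ⟨s, hs, rfl⟩
          have : simEq G (π.symm (π s)) x := by rwa [π.symm_apply_apply]
          exact (hatmem (π s)).mpr this
        · intro hcx
          exact ⟨π.symm c, (hatmem c).mp hcx, π.apply_symm_apply c⟩
      have hhat_eq : hatCls G x' = genCls G x' := by
        ext c
        constructor
        · intro hcx
          exact hsplit c x' hcx (simEq_refl' x')
        · intro hc
          exact simEq_of_zpowers_eq hc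
      set H := (hatCls G x).ncard with hH_def
      have hhatc : (hatCls G x').ncard = H := by
        rw [← hhat_img, Set.ncard_image_of_injective _ π.injective]
      have hm_count : m = d + H := by
        rw [hm_def, orderOf_eq_dSet_add_genCls x', hdx', ← hhat_eq, hhatc]
      have hyhat : genCls G y ⊆ hatCls G x :=
        fun c hc => simEq_trans' (simEq_of_zpowers_eq hc) hy
      have hzhat : genCls G z ⊆ hatCls G x :=
        fun c hc => simEq_trans' (simEq_of_zpowers_eq hc) hz
      have hdisj : Disjoint (genCls G y) (genCls G z) := by
        rw [Set.disjoint_left]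
        intro c h1 h2
        exact hyz ((h1 : zpowers c = zpowers y).symm.trans h2)
      set gy := (genCls G y).ncard with hgy_def
      set gz := (genCls G z).ncard with hgz_def
      have hny : n = d + gy := by
        have h := orderOf_eq_dSet_add_genCls y
        rwa [hyo, hSy, ← hd_def, ← hgy_def] at h
      have hnz : n = d + gz := by
        have h := orderOf_eq_dSet_add_genCls z
        rwa [hzo, hSz, ← hd_def, ← hgz_def] at h
      have hHge : gy + gz ≤ H := by
        rw [hgy_def, hgz_def, ← Set.ncard_union_eq hdisj]
        exact Set.ncard_le_ncard (Set.union_subset hyhat hzhat) (Set.toFinite _)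
      have hgy1 : 1 ≤ gy := by
        rw [hgy_def]
        exact (Set.ncard_pos (Set.toFinite _)).mpr ⟨y, rfl⟩
      have hx'1 : x' ≠ 1 := by
        intro h
        have h2 := hdx'
        rw [h, dSet_one, Set.ncard_empty] at h2
        omega
      have hm0 : (0 : ℕ) < m := orderOf_pos x'
      have hm1 : 1 < m := by
        have h0 : m ≠ 1 := fun h => hx'1 (orderOf_eq_one_iff.mp h)
        omega
      -- the pull-back lemma
      have hPull : ∀ c₁ c₂ : G, c₁ ∈ dSet x' → c₂ ∈ dSet x' → ¬zpowers c₁ ≤ zpowers c₂ →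
          ¬zpowers c₂ ≤ zpowers c₁ → dSet c₁ = dSet c₂ ∧ uSet c₁ = uSet c₂ := by
        intro c₁ c₂ h1 h2 h12 h21
        rw [hSx'] at h1 h2
        obtain ⟨a₁, ha₁, rfl⟩ := h1
        obtain ⟨a₂, ha₂, rfl⟩ := h2
        have ha₁D : a₁ ∈ D := by rw [← SetLike.mem_coe, hDcoe]; exact ha₁
        have ha₂D : a₂ ∈ D := by rw [← SetLike.mem_coe, hDcoe]; exact ha₂
        have hoD : ∀ a : G, a ∈ D → orderOf a ∣ p ^ j := by
          intro a ha
          have h := Subgroup.card_dvd_of_le (zpowers_le.mpr ha)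
          rwa [Nat.card_zpowers, hDcard, hdpj] at h
        obtain ⟨α, hα, hoα⟩ := (Nat.dvd_prime_pow hp).mp (hoD a₁ ha₁D)
        obtain ⟨β, hβ, hoβ⟩ := (Nat.dvd_prime_pow hp).mp (hoD a₂ ha₂D)
        have hy1 : a₁ ∈ zpowers y := (inf_le_left : D ≤ zpowers y) ha₁D
        have hy2 : a₂ ∈ zpowers y := (inf_le_left : D ≤ zpowers y) ha₂D
        have hzz : zpowers a₁ = zpowers a₂ := by
          rcases le_total α β with hab | hab
          · have hdvd : orderOf a₁ ∣ orderOf a₂ := by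
              rw [hoα, hoβ]; exact pow_dvd_pow p hab
            have hle := zpowers_le_of_orderOf_dvd hy1 hy2 hdvd
            rcases eq_or_lt_of_le hle with he | hlt
            · exact he
            · exact absurd ((zp_lt_iff hπ a₁ a₂).mpr hlt).le h12
          · have hdvd : orderOf a₂ ∣ orderOf a₁ := by
              rw [hoα, hoβ]; exact pow_dvd_pow p hab
            have hle := zpowers_le_of_orderOf_dvd hy2 hy1 hdvd
            rcases eq_or_lt_of_le hle with he | hlt
            · exact he.symm
            · exact absurd ((zp_lt_iff hπ a₂ a₁).mpr hlt).le h21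
        have hdss : dSet a₁ = dSet a₂ := by
          ext s
          simp only [mem_dSet, hzz]
        have huss : uSet a₁ = uSet a₂ := by
          ext s
          simp only [mem_uSet, hzz]
        constructor
        · rw [dSet_image hπ, dSet_image hπ, hdss]
        · rw [uSet_image hπ, uSet_image hπ, huss]
      set q := m.minFac with hq_def
      have hq : q.Prime := Nat.minFac_prime hm1.ne'
      have hqm : q ∣ m := m.minFac_dvd
      have hmk : ∀ e : ℕ, e ∣ m → e ≠ 0 → orderOf (x' ^ (m / e)) = e :=
        fun e he he0 => orderOf_pow_div he he0
      have hmem' : ∀ e : ℕ, e ∣ m → e ≠ 0 → e ≠ m → (x' ^ (m / e)) ∈ dSet x' := by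
        intro e he he0 hem
        apply mem_dSet.mpr
        apply zpowers_lt_of_mem_of_ne (npow_mem_zpowers x' _)
        rw [hmk e he he0]
        exact hem
      have hto : orderOf (x' ^ q) = m / q := by
        rw [orderOf_pow' x' hq.ne_zero, ← hm_def, Nat.gcd_eq_right hqm]
      by_cases hup : ∀ ρ : ℕ, ρ.Prime → ρ ∣ m → ρ = q
      · -- single prime : m = q*d, p = q, m = n, contradiction by counting
        have hset : dSet x' = (zpowers (x' ^ q) : Set G) := by
          apply Set.Subset.antisymm
          · intro c hc
            have hcz : c ∈ zpowers x' := dSet_subset_zpowers hc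
            have hco : orderOf c ∣ m := orderOf_dvd_of_zpowers_lt (mem_dSet.mp hc)
            have hcne : orderOf c ≠ m := orderOf_ne_of_zpowers_lt (mem_dSet.mp hc)
            obtain ⟨ρ, hρ, hρm, hcd⟩ := dvd_div_prime_of_proper hm0.ne' hco hcne
            rw [hup ρ hρ hρm] at hcd
            exact SetLike.mem_coe.mpr (mem_zpowers_of_orderOf_dvd hcz
              (npow_mem_zpowers x' q) (by rw [hto]; exact hcd))
          · intro c hc
            have hl1 : zpowers c ≤ zpowers (x' ^ q) := zpowers_le.mpr hc
            have hl2 : zpowers (x' ^ q) < zpowers x' := by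
              apply zpowers_lt_of_mem_of_ne (npow_mem_zpowers x' q)
              rw [hto]
              exact (Nat.div_lt_self hm0 hq.one_lt).ne
            exact mem_dSet.mpr (lt_of_le_of_lt hl1 hl2)
        have hdmq : d = m / q := by
          rw [← hdx', hset, ncard_coe_zpowers, hto]
        have hmqd : m = q * d := by
          rw [hdmq, Nat.mul_div_cancel' hqm]
        have hpq : p = q := by
          apply hup p hp
          rw [hmqd, hdpj]
          exact Dvd.dvd.mul_left (dvd_pow_self p (by omega)) q
        have hmn : m = n := by
          rw [hmqd, ← hpq, hdpj, hnpj', pow_succ, mul_comm]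
        omega
      · push_neg at hup
        obtain ⟨q2, hq2, hq2m, hq2ne⟩ := hup
        have hqq2 : q ≠ q2 := hq2ne.symm
        by_cases hsq : ∃ ρ σ : ℕ, ρ.Prime ∧ σ.Prime ∧ ρ ≠ σ ∧ ρ ^ 2 ∣ m ∧ σ ∣ m
        · -- a squared prime together with another prime
          obtain ⟨ρ, σ, hρ, hσ, hρσ, hρ2m, hσm⟩ := hsq
          have hρm : ρ ∣ m := (dvd_pow_self ρ two_ne_zero).trans hρ2m
          have hρnem : ρ ≠ m := by
            rintro rfl
            exact hρσ ((Nat.prime_dvd_prime_iff_eq hσ hρ).mp hσm).symm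
          have hσnem : σ ≠ m := by
            rintro rfl
            exact hρσ ((Nat.prime_dvd_prime_iff_eq hρ hσ).mp
              ((dvd_pow_self ρ two_ne_zero).trans hρ2m))
          have hρ2nem : ρ ^ 2 ≠ m := by
            intro h
            rw [← h] at hσm
            exact hρσ ((Nat.prime_dvd_prime_iff_eq hσ hρ).mp (hσ.dvd_of_dvd_pow hσm)).symm
          have hu₁o : orderOf (x' ^ (m / ρ)) = ρ := hmk ρ hρm hρ.ne_zero
          have hu₂o : orderOf (x' ^ (m / σ)) = σ := hmk σ hσm hσ.ne_zero
          have hvo : orderOf (x' ^ (m / ρ ^ 2)) = ρ ^ 2 :=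
            hmk _ hρ2m (pow_ne_zero 2 hρ.ne_zero)
          have hu₁d : (x' ^ (m / ρ)) ∈ dSet x' := hmem' ρ hρm hρ.ne_zero hρnem
          have hu₂d : (x' ^ (m / σ)) ∈ dSet x' := hmem' σ hσm hσ.ne_zero hσnem
          have h12 : ¬zpowers (x' ^ (m / ρ)) ≤ zpowers (x' ^ (m / σ)) := by
            intro h
            have hdv : orderOf (x' ^ (m / ρ)) ∣ orderOf (x' ^ (m / σ)) :=
              orderOf_dvd_of_mem_zpowers (zpowers_le.mp h)
            rw [hu₁o, hu₂o] at hdv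
            exact hρσ ((Nat.prime_dvd_prime_iff_eq hρ hσ).mp hdv)
          have h21 : ¬zpowers (x' ^ (m / σ)) ≤ zpowers (x' ^ (m / ρ)) := by
            intro h
            have hdv : orderOf (x' ^ (m / σ)) ∣ orderOf (x' ^ (m / ρ)) :=
              orderOf_dvd_of_mem_zpowers (zpowers_le.mp h)
            rw [hu₁o, hu₂o] at hdv
            exact hρσ ((Nat.prime_dvd_prime_iff_eq hσ hρ).mp hdv).symm
          obtain ⟨-, hus⟩ := hPull _ _ hu₁d hu₂d h12 h21
          have hv1 : (x' ^ (m / ρ ^ 2)) ∈ uSet (x' ^ (m / ρ)) := by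
            rw [mem_uSet]
            have hmm : (x' ^ (m / ρ)) ∈ zpowers (x' ^ (m / ρ ^ 2)) := by
              apply mem_zpowers_of_orderOf_dvd (npow_mem_zpowers x' _) (npow_mem_zpowers x' _)
              rw [hu₁o, hvo]
              exact dvd_pow_self ρ two_ne_zero
            apply zpowers_lt_of_mem_of_ne hmm
            rw [hu₁o, hvo]
            have hlt2 : ρ ^ 1 < ρ ^ 2 := Nat.pow_lt_pow_right hρ.one_lt one_lt_two
            rw [pow_one] at hlt2
            exact hlt2.ne
          have hv2 : (x' ^ (m / ρ ^ 2)) ∈ uSet (x' ^ (m / σ)) := hus ▸ hv1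
          rw [mem_uSet] at hv2
          have hdv : orderOf (x' ^ (m / σ)) ∣ orderOf (x' ^ (m / ρ ^ 2)) :=
            orderOf_dvd_of_zpowers_lt hv2
          rw [hu₂o, hvo] at hdv
          exact hρσ ((Nat.prime_dvd_prime_iff_eq hσ hρ).mp (hσ.dvd_of_dvd_pow hdv)).symm
        · push_neg at hsq
          have hnsq : ¬q ^ 2 ∣ m := fun h => hsq q q2 hq hq2 hqq2 h hq2m
          have hmeq' : m = q * (m / q) := (Nat.mul_div_cancel' hqm).symm
          have hq2mq : q2 ∣ m / q := by
            have hcop : Nat.Coprime q2 q := (Nat.coprime_primes hq2 hq).mpr hq2ne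
            have h2 := hq2m
            rw [hmeq', mul_comm] at h2
            exact hcop.dvd_of_dvd_mul_right h2
          have hu₁o : orderOf (x' ^ (m / q)) = q := hmk q hqm hq.ne_zero
          have hqnem : q ≠ m := by
            intro h
            rw [← h] at hq2m
            exact hq2ne ((Nat.prime_dvd_prime_iff_eq hq2 hq).mp hq2m)
          have hu₁d : (x' ^ (m / q)) ∈ dSet x' := hmem' q hqm hq.ne_zero hqnem
          have hvd : (x' ^ q) ∈ dSet x' := by
            apply mem_dSet.mpr
            apply zpowers_lt_of_mem_of_ne (npow_mem_zpowers x' q)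
            rw [hto]
            exact (Nat.div_lt_self hm0 hq.one_lt).ne
          have hmqpos : 0 < m / q := Nat.div_pos (Nat.le_of_dvd hm0 hqm) hq.pos
          have h12 : ¬zpowers (x' ^ (m / q)) ≤ zpowers (x' ^ q) := by
            intro h
            have hdv : orderOf (x' ^ (m / q)) ∣ orderOf (x' ^ q) :=
              orderOf_dvd_of_mem_zpowers (zpowers_le.mp h)
            rw [hu₁o, hto] at hdv
            apply hnsq
            rw [pow_two]
            calc q * q ∣ q * (m / q) := mul_dvd_mul_left q hdv
              _ = m := hmeq'.symm
          have h21 : ¬zpowers (x' ^ q) ≤ zpowers (x' ^ (m / q)) := by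
            intro h
            have hdv : orderOf (x' ^ q) ∣ orderOf (x' ^ (m / q)) :=
              orderOf_dvd_of_mem_zpowers (zpowers_le.mp h)
            rw [hu₁o, hto] at hdv
            rcases Nat.Prime.eq_one_or_self_of_dvd hq _ hdv with h' | h'
            · have hle2 := Nat.le_of_dvd (by omega) hq2mq
              have := hq2.two_le
              omega
            · apply hnsq
              rw [pow_two, hmeq', h']
          obtain ⟨hds, -⟩ := hPull _ _ hu₁d hvd h12 h21
          have hdu₁ : dSet (x' ^ (m / q)) = {(1 : G)} :=
            dSet_eq_singleton_of_prime (by rw [hu₁o]; exact hq)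
          by_cases hd2 : m / q = q2
          · -- m = q * q2 : the final counting case
            have hmeq : m = q * q2 := by rw [← hd2]; exact hmeq'
            -- Step 1 : every non-identity element below x has order p
            have hstep1 : ∀ c : G, c ∈ dSet x → c ≠ 1 → orderOf c = p := by
              intro c hc hc1
              have hu : π c ∈ dSet x' := by rw [hSx']; exact ⟨c, hc, rfl⟩
              have hu1 : π c ≠ 1 :=
                fun h => hc1 (π.injective (h.trans (perm_one_eq hπ).symm))
              have huo : orderOf (π c) ∣ m := orderOf_dvd_of_zpowers_lt (mem_dSet.mp hu)
              have huon : orderOf (π c) ≠ m := orderOf_ne_of_zpowers_lt (mem_dSet.mp hu)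
              have huo1 : orderOf (π c) ≠ 1 := fun h => hu1 (orderOf_eq_one_iff.mp h)
              have hupr : (orderOf (π c)).Prime := by
                rw [hmeq] at huo
                rcases eq_prime_of_dvd_mul_primes hq hq2 huo huo1
                  (by rw [← hmeq]; exact huon) with h | h
                · rw [h]; exact hq
                · rw [h]; exact hq2
              have hdsu : dSet (π c) = {(1 : G)} := dSet_eq_singleton_of_prime hupr
              have hdsc : dSet c = {(1 : G)} := by
                rw [dSet_image hπ] at hdsu
                ext s
                simp only [Set.mem_singleton_iff]
                constructor
                · intro hs
                  have hmem : π s ∈ π '' dSet c := ⟨s, hs, rfl⟩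
                  rw [hdsu, Set.mem_singleton_iff] at hmem
                  exact π.injective (hmem.trans (perm_one_eq hπ).symm)
                · rintro rfl
                  exact one_mem_dSet hc1
              have hcp : (orderOf c).Prime := orderOf_prime_of_dSet_singleton hc1 hdsc
              have hcD : c ∈ D := by rw [← SetLike.mem_coe, hDcoe]; exact hc
              have hcd : orderOf c ∣ p ^ j := by
                have h1 := Subgroup.card_dvd_of_le (zpowers_le.mpr hcD)
                rwa [Nat.card_zpowers, hDcard, hdpj] at h1
              exact (Nat.prime_dvd_prime_iff_eq hcp hp).mp (hcp.dvd_of_dvd_pow hcd)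
            -- Step 2 : j = 1
            have hj_eq : j = 1 := by
              by_contra hj2
              have hdvd : p ^ (j - 1) ∣ n := by
                rw [hnpj']; exact pow_dvd_pow p (by omega)
              have ht2o : orderOf (x ^ p ^ (j - 1)) = p ^ 2 := by
                rw [orderOf_pow' x (pow_ne_zero _ hp.ne_zero), ← hn_def,
                  Nat.gcd_eq_right hdvd, hnpj', Nat.pow_div (by omega) hp.pos,
                  show j + 1 - (j - 1) = 2 by omega]
              have ht2ne : orderOf (x ^ p ^ (j - 1)) ≠ orderOf x := by
                rw [ht2o, ← hn_def, hnpj']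
                intro h
                have := Nat.pow_right_injective hp.two_le h
                omega
              have ht2d : x ^ p ^ (j - 1) ∈ dSet x :=
                mem_dSet.mpr (zpowers_lt_of_mem_of_ne (npow_mem_zpowers x _) ht2ne)
              have hlt1 : 1 < p ^ 2 :=
                lt_of_lt_of_le hp.one_lt (Nat.le_self_pow two_ne_zero p)
              have ht21 : x ^ p ^ (j - 1) ≠ 1 := by
                intro h
                rw [h, orderOf_one] at ht2o
                rw [← ht2o] at hlt1
                exact lt_irrefl _ hlt1
              have hfin := hstep1 _ ht2d ht21
              rw [ht2o] at hfin
              have hlt2 : p ^ 1 < p ^ 2 := Nat.pow_lt_pow_right hp.one_lt one_lt_two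
              rw [pow_one, hfin] at hlt2
              exact lt_irrefl _ hlt2
            have hdp : d = p := by rw [hdpj, hj_eq, pow_one]
            have hnp2 : n = p ^ 2 := by rw [hnpj', hj_eq]
            -- Step 3 : q + q2 ≤ p + 1
            have hq2nem : q2 ≠ m := fun h => hqq2
              ((Nat.prime_dvd_prime_iff_eq hq hq2).mp (h ▸ hqm))
            have hu₂o : orderOf (x' ^ (m / q2)) = q2 := hmk q2 hq2m hq2.ne_zero
            have hu₂d : (x' ^ (m / q2)) ∈ dSet x' := hmem' q2 hq2m hq2.ne_zero hq2nem
            have hsub : (zpowers (x' ^ (m / q)) : Set G) ∪ (zpowers (x' ^ (m / q2)) : Set G)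
                ⊆ dSet x' := by
              rintro c (hc | hc)
              · exact mem_dSet.mpr (lt_of_le_of_lt (zpowers_le.mpr hc) (mem_dSet.mp hu₁d))
              · exact mem_dSet.mpr (lt_of_le_of_lt (zpowers_le.mpr hc) (mem_dSet.mp hu₂d))
            have hinter : ((zpowers (x' ^ (m / q)) : Set G) ∩
                (zpowers (x' ^ (m / q2)) : Set G)).ncard = 1 := by
              rw [← Subgroup.coe_inf]
              have hi1 : Nat.card (zpowers (x' ^ (m / q)) ⊓ zpowers (x' ^ (m / q2)) :
                  Subgroup G) ∣ q := by
                have h := Subgroup.card_dvd_of_le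
                  (inf_le_left : zpowers (x' ^ (m / q)) ⊓ zpowers (x' ^ (m / q2)) ≤ _)
                rwa [Nat.card_zpowers, hu₁o] at h
              have hi2 : Nat.card (zpowers (x' ^ (m / q)) ⊓ zpowers (x' ^ (m / q2)) :
                  Subgroup G) ∣ q2 := by
                have h := Subgroup.card_dvd_of_le
                  (inf_le_right : zpowers (x' ^ (m / q)) ⊓ zpowers (x' ^ (m / q2)) ≤ _)
                rwa [Nat.card_zpowers, hu₂o] at h
              have hcop : Nat.Coprime q q2 := (Nat.coprime_primes hq hq2).mpr hqq2
              have hone : Nat.card (zpowers (x' ^ (m / q)) ⊓ zpowers (x' ^ (m / q2)) :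
                  Subgroup G) = 1 := by
                have := Nat.dvd_gcd hi1 hi2
                rw [Nat.Coprime.gcd_eq_one hcop] at this
                exact Nat.dvd_one.mp this
              rw [← Nat.card_coe_set_eq, SetLike.coe_sort_coe, hone]
            have hUcard : ((zpowers (x' ^ (m / q)) : Set G) ∪
                (zpowers (x' ^ (m / q2)) : Set G)).ncard + 1 = q + q2 := by
              have h := Set.ncard_union_add_ncard_inter
                (zpowers (x' ^ (m / q)) : Set G) (zpowers (x' ^ (m / q2)) : Set G)
              rw [hinter, ncard_coe_zpowers, ncard_coe_zpowers, hu₁o, hu₂o] at h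
              exact h
            have hle' : ((zpowers (x' ^ (m / q)) : Set G) ∪
                (zpowers (x' ^ (m / q2)) : Set G)).ncard ≤ d := by
              rw [← hdx']
              exact Set.ncard_le_ncard hsub (Set.toFinite _)
            have hqd : q + q2 ≤ p + 1 := by omega
            -- Step 4 : arithmetic contradiction
            have hgyz : gy = gz := by omega
            have hmge : m + d ≥ 2 * n := by omega
            have hAM : 4 * m ≤ (q + q2) ^ 2 := by
              rw [hmeq]
              exact am_gm_nat q q2
            have hsq2 : (q + q2) ^ 2 ≤ (p + 1) ^ 2 := Nat.pow_le_pow_left hqd 2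
            have hmge' : m + p ≥ 2 * p ^ 2 := by
              rw [← hnp2, ← hdp]
              omega
            exact final_arith hp.two_le hmge' hAM hsq2
          · -- m / q is composite : contradiction via dSet equality
            have hc0o : orderOf ((x' ^ q) ^ (m / q / q2)) = q2 := by
              have h := orderOf_pow_div (w := x' ^ q) (e := q2)
                (by rw [hto]; exact hq2mq) hq2.ne_zero
              rwa [hto] at h
            have hc0lt : zpowers ((x' ^ q) ^ (m / q / q2)) < zpowers (x' ^ q) := by
              apply zpowers_lt_of_mem_of_ne (npow_mem_zpowers _ _)
              rw [hc0o, hto]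
              exact fun h => hd2 h.symm
            have hmem0 : (x' ^ q) ^ (m / q / q2) ∈ dSet (x' ^ (m / q)) :=
              hds ▸ mem_dSet.mpr hc0lt
            rw [hdu₁, Set.mem_singleton_iff] at hmem0
            rw [hmem0, orderOf_one] at hc0o
            exact hq2.one_lt.ne' hc0o.symm
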